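/- Let R be a commutative noetherian ring, I, J ideals of R, M a finitely generated R-module, and N an arbitrary R-module. Then Ass_R(Γ_{I,J}(M,N)) = Supp_R(M) ∩ Ass_R(N) ∩ W(I,J). -/

import Mathlib

open CategoryTheory

section GammaDefs

variable {R : Type} [CommRing R]

lemma gammaIJ_aux {M : Type} [AddCommGroup M] [Module R M] (I J : Ideal R) (x : M) (n : ℕ) :
    (∀ a ∈ I ^ n, ∃ j ∈ J, a • x = j • x) ↔ I ^ n ≤ Ideal.torsionOf R M x ⊔ J := by
  constructor
  · intro h a ha
    obtain ⟨j, hj, hja⟩ := h a ha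
    exact Submodule.mem_sup.2 ⟨a - j, by simp [Ideal.mem_torsionOf_iff, sub_smul, hja],
      j, hj, by ring⟩
  · intro h a ha
    obtain ⟨s, hs, j, hj, hsj⟩ := Submodule.mem_sup.1 (h ha)
    refine ⟨j, hj, ?_⟩
    rw [← hsj, add_smul, (Ideal.mem_torsionOf_iff _ _).1 hs, zero_add]

/-- The `(I,J)`-torsion submodule: elements `x` such that `I^n x ⊆ J x` for some `n > 0`. -/
def gammaIJ (I J : Ideal R) (M : Type) [AddCommGroup M] [Module R M] : Submodule R M where
  carrier := {x | ∃ n : ℕ, 0 < n ∧ ∀ a ∈ I ^ n, ∃ j ∈ J, a • x = j • x}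
  zero_mem' := ⟨1, one_pos, fun a _ => ⟨0, J.zero_mem, by simp⟩⟩
  add_mem' := by
    rintro x y ⟨n, hn, hx⟩ ⟨m, hm, hy⟩
    refine ⟨n + m, by omega, (gammaIJ_aux I J _ _).2 ?_⟩
    rw [pow_add]
    refine le_trans (Ideal.mul_mono ((gammaIJ_aux I J _ _).1 hx) ((gammaIJ_aux I J _ _).1 hy))
      (Ideal.mul_le.2 ?_)
    rintro a ha b hb
    obtain ⟨s, hs, j, hj, rfl⟩ := Submodule.mem_sup.1 ha
    obtain ⟨t, ht, j', hj', rfl⟩ := Submodule.mem_sup.1 hb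
    rw [Ideal.mem_torsionOf_iff] at hs ht
    refine Submodule.mem_sup.2 ⟨s * t, ?_, s * j' + j * t + j * j',
      J.add_mem (J.add_mem (J.mul_mem_left s hj') (J.mul_mem_right t hj)) (J.mul_mem_left j hj'),
      by ring⟩
    have h1 : (s * t) • x = 0 := by rw [mul_comm, mul_smul, hs, smul_zero]
    have h2 : (s * t) • y = 0 := by rw [mul_smul, ht, smul_zero]
    rw [Ideal.mem_torsionOf_iff, smul_add, h1, h2, add_zero]
  smul_mem' := by
    rintro r x ⟨n, hn, hx⟩
    refine ⟨n, hn, fun a ha => ?_⟩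
    obtain ⟨j, hj, hja⟩ := hx a ha
    exact ⟨j, hj, by rw [smul_comm, hja, smul_comm]⟩

/-- The `I`-torsion submodule: elements killed by a power of `I`. -/
def gammaI (I : Ideal R) (M : Type) [AddCommGroup M] [Module R M] : Submodule R M where
  carrier := {x | ∃ n : ℕ, 0 < n ∧ ∀ a ∈ I ^ n, a • x = 0}
  zero_mem' := ⟨1, one_pos, fun a _ => smul_zero a⟩
  add_mem' := by
    rintro x y ⟨n, hn, hx⟩ ⟨m, hm, hy⟩
    refine ⟨n + m, by omega, fun a ha => ?_⟩
    rw [smul_add, hx a (Ideal.pow_le_pow_right (by omega) ha),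
      hy a (Ideal.pow_le_pow_right (by omega) ha), add_zero]
  smul_mem' := by
    rintro r x ⟨n, hn, hx⟩
    exact ⟨n, hn, fun a ha => by rw [smul_comm, hx a ha, smul_zero]⟩

end GammaDefs




section AuxLemmas

variable {R : Type} [CommRing R]

lemma eigen_mem_aux {M : Type} [AddCommGroup M] [Module R M] [Module.Finite R M]
    {p : Ideal R} (hp : p.IsPrime) (hann : Module.annihilator R M ≤ p)
    {a : R} (ha : ∀ m : M, a • m ∈ (p • ⊤ : Submodule R M)) : a ∈ p := by
  obtain ⟨q, hmonic, -, hcoeff, haeval⟩ :=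
    LinearMap.exists_monic_and_coeff_mem_pow_and_aeval_eq_zero_of_range_le_smul R
      (algebraMap R (Module.End R M) a) p (by
        rintro x ⟨m, rfl⟩
        simpa [Module.algebraMap_end_apply] using ha m)
  have heval : q.eval a ∈ p := by
    refine hann ?_
    rw [Module.mem_annihilator]
    intro m
    have : (Polynomial.aeval (algebraMap R (Module.End R M) a)) q m = 0 := by rw [haeval]; rfl
    rwa [Polynomial.aeval_algebraMap_apply, Module.algebraMap_end_apply] at this
  have hpow : a ^ q.natDegree ∈ p := by
    have h1 : q.eval a = (∑ i ∈ Finset.range q.natDegree, q.coeff i * a ^ i) + a ^ q.natDegree := by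
      rw [Polynomial.eval_eq_sum_range, Finset.sum_range_succ, hmonic.coeff_natDegree, one_mul]
    have h2 : (∑ i ∈ Finset.range q.natDegree, q.coeff i * a ^ i) ∈ p := by
      refine Ideal.sum_mem _ fun i hi => Ideal.mul_mem_right _ _ ?_
      rw [Finset.mem_range] at hi
      exact (Ideal.pow_le_self (by omega : q.natDegree - i ≠ 0)) (hcoeff i)
    have := p.sub_mem heval h2
    rwa [h1, add_sub_cancel_left] at this
  exact hp.mem_of_pow_mem _ hpow

lemma exists_good_elt_aux {M : Type} [AddCommGroup M] [Module R M]
    {p : Ideal R} (hp : p.IsPrime) (s : Finset M) (hs : Submodule.span R (s : Set M) = ⊤)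
    (T : Submodule R M) (hT : ∀ b : R, (∀ x : M, b • x ∈ T) → b ∈ p) :
    ∃ m : M, ∀ a : R, a • m ∈ T → a ∈ p := by
  by_contra hcon
  push_neg at hcon
  classical
  choose f hf1 hf2 using hcon
  have hbp : (∏ m ∈ s, f m) ∈ p.primeCompl := Submonoid.prod_mem _ fun m _ => hf2 m
  have hbT : ∀ x : M, (∏ m ∈ s, f m) • x ∈ T := by
    have hle : Submodule.span R (s : Set M) ≤
        T.comap (LinearMap.lsmul R M (∏ m ∈ s, f m)) := by
      rw [Submodule.span_le]
      intro m hm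
      simp only [Submodule.mem_comap, LinearMap.lsmul_apply, SetLike.mem_coe] at *
      rw [← Finset.mul_prod_erase s f hm, mul_comm, mul_smul]
      exact T.smul_mem _ (hf1 m)
    rw [hs] at hle
    exact fun x => hle Submodule.mem_top
  exact hbp (hT _ hbT)

set_option maxHeartbeats 2000000 in
/-- If `Ann M ≤ p`, there is a nonzero map `M → R/p`. -/
lemma exists_hom_ne_zero_aux {M : Type} [AddCommGroup M] [Module R M] [Module.Finite R M]
    {p : Ideal R} (hp : p.IsPrime) (hann : Module.annihilator R M ≤ p) :
    ∃ φ : M →ₗ[R] R ⧸ p, φ ≠ 0 := by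
  classical
  haveI := hp
  set D := R ⧸ p with hD
  set Mb := M ⧸ (p • ⊤ : Submodule R M) with hMb
  haveI : Module.Finite D Mb := Module.Finite.of_restrictScalars_finite R D Mb
  obtain ⟨s, hs⟩ := Module.Finite.fg_top (R := R) (M := M)
  obtain ⟨m, hm⟩ := exists_good_elt_aux hp s hs (p • ⊤ : Submodule R M)
      (fun b hb => eigen_mem_aux hp hann hb)
  set mb : Mb := Submodule.Quotient.mk m with hmb
  set K := FractionRing D with hK
  set V := LocalizedModule (nonZeroDivisors D) Mb with hV
  set v : V := LocalizedModule.mkLinearMap (nonZeroDivisors D) Mb mb with hv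
  have hv0 : v ≠ 0 := by
    intro h
    rw [hv, show (0 : V) = LocalizedModule.mk 0 1 by rw [LocalizedModule.zero_mk]] at h
    rw [show LocalizedModule.mkLinearMap (nonZeroDivisors D) Mb mb = LocalizedModule.mk mb 1
        from rfl, LocalizedModule.mk_eq] at h
    obtain ⟨u, hu⟩ := h
    have hu' : (u : D) • mb = 0 := by simpa [Submonoid.smul_def] using hu
    obtain ⟨c, hc⟩ := Ideal.Quotient.mk_surjective (u : D)
    rw [← hc, hmb, Module.Quotient.mk_smul_mk, Submodule.Quotient.mk_eq_zero] at hu'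
    have : c ∈ p := hm c hu'
    have : (u : D) = 0 := by rw [← hc, Ideal.Quotient.eq_zero_iff_mem]; exact this
    exact nonZeroDivisors.ne_zero u.2 this
  obtain ⟨q, hq⟩ := Submodule.exists_isCompl (K ∙ v)
  set e := LinearEquiv.toSpanNonzeroSingleton K V v hv0 with he
  set g : V →ₗ[K] K := e.symm.toLinearMap ∘ₗ Submodule.linearProjOfIsCompl _ q hq with hg
  have hgv : g v ≠ 0 := by
    have h1 : Submodule.linearProjOfIsCompl _ q hq v = e 1 := by
      rw [show e 1 = ⟨v, Submodule.mem_span_singleton_self v⟩ by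
        apply Subtype.ext; simp [he, LinearEquiv.toSpanNonzeroSingleton]]
      exact Submodule.linearProjOfIsCompl_apply_left hq ⟨v, Submodule.mem_span_singleton_self v⟩
    rw [hg]
    simp only [LinearMap.coe_comp, Function.comp_apply, LinearEquiv.coe_coe, h1,
      LinearEquiv.symm_apply_apply]
    exact one_ne_zero
  set ψ : Mb →ₗ[D] K := (g.restrictScalars D) ∘ₗ LocalizedModule.mkLinearMap (nonZeroDivisors D) Mb
    with hψ
  have hψmb : ψ mb ≠ 0 := hgv
  obtain ⟨t, ht⟩ := Module.Finite.fg_top (R := D) (M := Mb)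
  obtain ⟨b, hb⟩ := IsLocalization.exist_integer_multiples_of_finset (nonZeroDivisors D)
    (t.image ψ)
  set S' : Submodule D K := LinearMap.range (Algebra.linearMap D K) with hS'
  have hrange : ∀ x : Mb, ((b : D) • ψ) x ∈ S' := by
    have hle : Submodule.span D (t : Set Mb) ≤ S'.comap ((b : D) • ψ) := by
      rw [Submodule.span_le]
      intro x hx
      simp only [Submodule.mem_comap, SetLike.mem_coe] at *
      have := hb (ψ x) (Finset.mem_image_of_mem ψ hx)
      obtain ⟨d, hd⟩ := this
      exact ⟨d, by simpa using hd⟩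
    rw [ht] at hle
    exact fun x => hle Submodule.mem_top
  have hinj : Function.Injective (Algebra.linearMap D K) := IsFractionRing.injective D K
  set e2 : D ≃ₗ[D] S' := LinearEquiv.ofInjective (Algebra.linearMap D K) hinj with he2
  set φb : Mb →ₗ[D] D := e2.symm.toLinearMap ∘ₗ LinearMap.codRestrict S' ((b : D) • ψ) hrange
    with hφb
  have hφb0 : φb mb ≠ 0 := by
    intro h
    have : ((b : D) • ψ) mb = 0 := by
      rw [hφb] at h
      simp only [LinearMap.coe_comp, Function.comp_apply, LinearEquiv.coe_coe] at h
      have h2 := congrArg e2 h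
      rw [LinearEquiv.apply_symm_apply, LinearEquiv.map_zero] at h2
      have h3 := congrArg (Subtype.val) h2
      simpa using h3
    rw [LinearMap.smul_apply, Algebra.smul_def] at this
    have hb0 : algebraMap D K (b : D) ≠ 0 := fun hh =>
      nonZeroDivisors.ne_zero b.2 (hinj (by simpa using hh))
    exact hψmb (by
      rcases mul_eq_zero.1 this with h | h
      · exact absurd h hb0
      · exact h)
  refine ⟨(φb.restrictScalars R) ∘ₗ Submodule.mkQ (p • ⊤ : Submodule R M), fun h => hφb0 ?_⟩
  have := congrArg (fun f => f m) h
  simp at this; exact this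

lemma exists_hom_torsionOf_eq_aux {M N : Type} [AddCommGroup M] [Module R M]
    [AddCommGroup N] [Module R N]
    (p : Ideal R) (hp : p.IsPrime) (y : N) (hy : p = (Submodule.span R {y}).annihilator)
    (φ₀ : M →ₗ[R] R ⧸ p) (hφ₀ : φ₀ ≠ 0) :
    ∃ φ : M →ₗ[R] N, Ideal.torsionOf R (M →ₗ[R] N) φ = p := by
  haveI := hp
  have hyp : ∀ a : R, a • y = 0 ↔ a ∈ p := by
    intro a
    rw [hy, Submodule.mem_annihilator_span_singleton]
  have hle : p ≤ LinearMap.ker (LinearMap.toSpanSingleton R N y) := by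
    intro a ha
    rw [LinearMap.mem_ker, LinearMap.toSpanSingleton_apply]
    exact (hyp a).2 ha
  have hle' : LinearMap.ker (LinearMap.toSpanSingleton R N y) ≤ p := by
    intro a ha
    rw [LinearMap.mem_ker, LinearMap.toSpanSingleton_apply] at ha
    exact (hyp a).1 ha
  set ι : (R ⧸ p) →ₗ[R] N := Submodule.liftQ p (LinearMap.toSpanSingleton R N y) hle with hι
  have hιinj : Function.Injective ι := by
    rw [← LinearMap.ker_eq_bot, hι, Submodule.ker_liftQ_eq_bot]
    exact hle'
  obtain ⟨m₀, hm₀⟩ := DFunLike.ne_iff.1 hφ₀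
  refine ⟨ι ∘ₗ φ₀, ?_⟩
  ext a
  rw [Ideal.mem_torsionOf_iff]
  constructor
  · intro h
    have h1 : ∀ m : M, ι (a • φ₀ m) = 0 := by
      intro m
      have := congrArg (fun f => f m) h
      simpa [map_smul] using this
    have h2 : a • φ₀ m₀ = 0 := hιinj (by rw [h1 m₀, map_zero])
    rw [Algebra.smul_def, Ideal.Quotient.algebraMap_eq] at h2
    rcases mul_eq_zero.1 h2 with h3 | h3
    · rwa [Ideal.Quotient.eq_zero_iff_mem] at h3
    · exact absurd h3 (by simpa using hm₀)
  · intro ha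
    ext m
    have : a • φ₀ m = 0 := by
      rw [Algebra.smul_def, Ideal.Quotient.algebraMap_eq,
        Ideal.Quotient.eq_zero_iff_mem.2 ha, zero_mul]
    show a • ι (φ₀ m) = (0 : M →ₗ[R] N) m
    rw [← map_smul, this, map_zero, LinearMap.zero_apply]

end AuxLemmas

/-- Corollary 2.3: `Ass(Γ_{I,J}(M,N)) = Supp M ∩ Ass N ∩ W(I,J)`. -/
theorem ass_gammaIJ_hom (R : Type) [CommRing R] [IsNoetherianRing R] (I J : Ideal R)
    (M N : Type) [AddCommGroup M] [Module R M] [Module.Finite R M]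
    [AddCommGroup N] [Module R N] :
    associatedPrimes R ↥(gammaIJ I J (M →ₗ[R] N)) =
      {p : Ideal R | ∃ hp : p.IsPrime, (⟨p, hp⟩ : PrimeSpectrum R) ∈ Module.support R M} ∩
        associatedPrimes R N ∩
        {p : Ideal R | p.IsPrime ∧ ∃ n : ℕ, 0 < n ∧ I ^ n ≤ p ⊔ J} := by
  classical
  ext p
  constructor
  · intro hmem
    obtain ⟨hp, x, hx⟩ := isAssociatedPrime_iff.1 hmem
    have hxt : ∀ a : R, a • (x : M →ₗ[R] N) = 0 ↔ a ∈ p := by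
      intro a
      rw [hx, Submodule.mem_colon_singleton, Submodule.mem_bot]
      exact ⟨fun h => Subtype.ext h, fun h => congrArg Subtype.val h⟩
    have hφ0 : (x : M →ₗ[R] N) ≠ 0 := by
      intro h
      exact hp.ne_top ((Ideal.eq_top_iff_one p).2 ((hxt 1).1 (by rw [one_smul, h])))
    obtain ⟨s, hs⟩ := Module.Finite.fg_top (R := R) (M := M)
    refine ⟨⟨⟨hp, ?_⟩, ?_⟩, hp, ?_⟩
    · rw [Module.support_eq_zeroLocus, PrimeSpectrum.mem_zeroLocus]
      intro a ha
      refine (hxt a).1 ?_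
      ext m
      show a • (x : M →ₗ[R] N) m = (0 : M →ₗ[R] N) m
      rw [← map_smul, Module.mem_annihilator.1 ha m, map_zero, LinearMap.zero_apply]
    · obtain ⟨m, hm⟩ := exists_good_elt_aux hp s hs (LinearMap.ker (x : M →ₗ[R] N))
        (fun b hb => (hxt b).1 (by
          ext m'
          show b • (x : M →ₗ[R] N) m' = (0 : M →ₗ[R] N) m'
          rw [LinearMap.zero_apply, ← map_smul]
          exact LinearMap.mem_ker.1 (hb m')))
      refine isAssociatedPrime_iff.2 ⟨hp, (x : M →ₗ[R] N) m, ?_⟩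
      ext a
      rw [Submodule.mem_colon_singleton, Submodule.mem_bot]
      constructor
      · intro ha
        exact congrArg (fun f => f m) ((hxt a).2 ha)
      · intro ha
        exact hm a (by rw [LinearMap.mem_ker, map_smul, ha])
    · obtain ⟨n, hn, hxn⟩ := x.2
      refine ⟨n, hn, ?_⟩
      have h := (gammaIJ_aux I J (x : M →ₗ[R] N) n).1 hxn
      have ht : Ideal.torsionOf R (M →ₗ[R] N) (x : M →ₗ[R] N) = p := by
        ext a
        rw [Ideal.mem_torsionOf_iff]
        exact hxt a
      rwa [ht] at h
  · rintro ⟨⟨⟨hp, hsupp⟩, hassN⟩, hp2, n, hn, hIn⟩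
    obtain ⟨hpN, y, hy⟩ := isAssociatedPrime_iff.1 hassN
    have hann : Module.annihilator R M ≤ p := by
      rw [Module.support_eq_zeroLocus, PrimeSpectrum.mem_zeroLocus] at hsupp
      exact hsupp
    obtain ⟨φ₀, hφ₀⟩ := exists_hom_ne_zero_aux hp hann
    obtain ⟨φ, hφ⟩ := exists_hom_torsionOf_eq_aux p hp y (by rw [hy]; ext a; rw [Submodule.mem_colon_singleton, Submodule.mem_bot, Submodule.mem_annihilator_span_singleton]) φ₀ hφ₀
    have hmem : φ ∈ gammaIJ I J (M →ₗ[R] N) :=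
      ⟨n, hn, (gammaIJ_aux I J φ n).2 (by rw [hφ]; exact hIn)⟩
    refine isAssociatedPrime_iff.2 ⟨hp, ⟨φ, hmem⟩, ?_⟩
    ext a
    rw [Submodule.mem_colon_singleton, Submodule.mem_bot, ← hφ, Ideal.mem_torsionOf_iff]
    exact ⟨fun h => Subtype.ext h, fun h => congrArg Subtype.val h⟩
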